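/- (Touching-map inverse is Lipschitz with controlled Jacobian.) Let u be semiconcave on B₁ and a ≥ 1. Suppose for y in a measurable set V ⊆ ℝ^d the map z ↦ u(z) + (a/2)|z-y|² attains its infimum over B₁ at a measurable choice z̄(y) ∈ B₁, and let A := z̄(V). Then u is C^{1,1} on A, z̄ has Lipschitz inverse ȳ(z) = z + (1/a)Du(z) on A, and at every point z of A where u is twice differentiable, Dȳ(z) = I + (1/a)D²u(z) ≥ 0. -/

import Mathlib

open Metric

set_option maxHeartbeats 1000000

section Aux

variable {F : Type*} [NormedAddCommGroup F] [InnerProductSpace ℝ F] [CompleteSpace F]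

local notation "⟪" x ", " y "⟫" => @inner ℝ _ _ x y






lemma sq_expand (x z y : F) : ‖x - y‖^2 = ‖x-z‖^2 + 2*⟪x-z, z-y⟫ + ‖z-y‖^2 := by
  have h : x - y = (x-z) + (z-y) := by abel
  rw [h, norm_add_sq_real]

lemma fderiv_from_bounds {u : F → ℝ} {p z : F} {C : ℝ}
    (hbound : ∀ x ∈ ball (0:F) 1, |u x - u z - ⟪p, x - z⟫| ≤ C*‖x-z‖^2) :
    HasFDerivWithinAt u (InnerProductSpace.toDual ℝ F p) (ball 0 1) z := by
  rw [hasFDerivWithinAt_iff_isLittleO]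
  have h1 : (fun x => u x - u z - ⟪p, x - z⟫) =O[nhdsWithin z (ball (0:F) 1)]
      fun x => ‖x - z‖^2 := by
    rw [Asymptotics.isBigO_iff]
    refine ⟨C, eventually_nhdsWithin_of_forall fun x hx => ?_⟩
    have := hbound x hx
    rw [Real.norm_eq_abs, Real.norm_eq_abs, abs_of_nonneg (sq_nonneg ‖x - z‖)]
    exact this
  have h2 : (fun x : F => ‖x - z‖^2) =o[nhdsWithin z (ball (0:F) 1)] fun x => x - z :=
    (Asymptotics.isLittleO_pow_sub_sub z (by norm_num : 1 < 2)).mono nhdsWithin_le_nhds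
  have h3 := h1.trans_isLittleO h2
  simp only [InnerProductSpace.toDual_apply_apply]
  exact h3

lemma hess_pos {u : F → ℝ} {a : ℝ} (ha : 0 < a) {z y : F} (hzb : ‖z‖ < 1)
    (hmin : ∀ x ∈ ball (0:F) 1, u z + (a/2)*‖z-y‖^2 ≤ u x + (a/2)*‖x-y‖^2)
    (p : F →L[ℝ] ℝ) (H : F →L[ℝ] F →L[ℝ] ℝ)
    (hexp : (fun x => u x - u z - p (x - z) - (1/2) * H (x-z) (x-z))
      =o[nhds z] fun x => ‖x - z‖^2)
    (v : F) : 0 ≤ ‖v‖^2 + a⁻¹ * H v v := by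
  rcases eq_or_ne v 0 with rfl | hv
  · simp
  have hvn : 0 < ‖v‖ := norm_pos_iff.2 hv
  obtain ⟨S, hS⟩ : ∃ S : ℝ, S = (a/2)*‖v‖^2 + (1/2)*(H v v) := ⟨_, rfl⟩
  suffices hSnn : 0 ≤ S by
    have : a⁻¹ * (2*S) = ‖v‖^2 + a⁻¹ * H v v := by
      rw [hS]
      field_simp
    rw [← this]
    positivity
  by_contra hneg
  push_neg at hneg
  obtain ⟨ε, hε⟩ : ∃ ε : ℝ, ε = (-S)/(2*‖v‖^2) := ⟨_, rfl⟩
  have hεpos : 0 < ε := by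
    rw [hε]
    have : 0 < -S := by linarith
    positivity
  have hev := (hexp.def hεpos)
  rw [Metric.eventually_nhds_iff] at hev
  obtain ⟨ρ, hρpos, hρ⟩ := hev
  obtain ⟨t, htdef⟩ : ∃ t : ℝ, t = min (ρ/(2*‖v‖)) ((1-‖z‖)/(2*‖v‖)) := ⟨_, rfl⟩
  have htpos : 0 < t := by
    rw [htdef]
    refine lt_min (by positivity) ?_
    have : 0 < 1 - ‖z‖ := by linarith
    positivity
  have htv1 : t*‖v‖ < ρ := by
    have h1 : t ≤ ρ/(2*‖v‖) := htdef ▸ min_le_left _ _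
    have h3 := mul_le_mul_of_nonneg_right h1 hvn.le
    have h2 : ρ/(2*‖v‖)*‖v‖ = ρ/2 := by
      field_simp
    rw [h2] at h3
    linarith
  have htv2 : t*‖v‖ < 1 - ‖z‖ := by
    have h1 : t ≤ (1-‖z‖)/(2*‖v‖) := htdef ▸ min_le_right _ _
    have h3 := mul_le_mul_of_nonneg_right h1 hvn.le
    have h2 : (1-‖z‖)/(2*‖v‖)*‖v‖ = (1-‖z‖)/2 := by
      field_simp
    rw [h2] at h3
    have h4 : 0 < 1 - ‖z‖ := by linarith
    linarith
  -- the two test points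
  have hkey : ∀ s : ℝ, |s| = t → 0 ≤ ε*(t*‖v‖)^2 + s * (p v + a*⟪v, z-y⟫) + t^2 * S := by
    intro s hs
    have hsn : ‖z + s•v - z‖ = t*‖v‖ := by
      rw [add_sub_cancel_left, norm_smul, Real.norm_eq_abs, hs]
    have hxb : z + s•v ∈ ball (0:F) 1 := by
      rw [mem_ball_zero_iff]
      refine lt_of_le_of_lt (norm_add_le _ _) ?_
      rw [norm_smul, Real.norm_eq_abs, hs]
      linarith
    have hdist : dist (z + s•v) z < ρ := by
      rw [dist_eq_norm, hsn]
      exact htv1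
    have hR := hρ hdist
    rw [Real.norm_eq_abs, Real.norm_eq_abs, hsn,
      abs_of_nonneg (sq_nonneg (t*‖v‖))] at hR
    have hRlow : u (z + s•v) - u z - p ((z + s•v) - z)
        - (1/2) * H ((z + s•v) - z) ((z + s•v) - z) ≤ ε*(t*‖v‖)^2 := by
      have := abs_le.1 hR
      linarith [this.2]
    have hmin' := hmin (z + s•v) hxb
    have hsq := sq_expand (z + s•v) z y
    rw [hsn] at hsq
    have hinn : ⟪z + s•v - z, z - y⟫ = s * ⟪v, z-y⟫ := by
      rw [add_sub_cancel_left, real_inner_smul_left]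
    rw [hinn] at hsq
    have hps : p ((z + s•v) - z) = s * p v := by
      rw [add_sub_cancel_left, map_smul, smul_eq_mul]
    have hHs : H ((z + s•v) - z) ((z + s•v) - z) = s^2 * H v v := by
      rw [add_sub_cancel_left]
      simp only [map_smul, ContinuousLinearMap.smul_apply, smul_eq_mul]
      ring
    have hs2 : s^2 = t^2 := by rw [← sq_abs, hs]
    rw [hps, hHs, hs2] at hRlow
    -- hmin' : u z + (a/2)‖z-y‖² ≤ u (z+s•v) + (a/2)‖z+s•v-y‖²
    -- hsq : ‖z+s•v-y‖² = (t‖v‖)² + 2 s⟪v,z-y⟫ + ‖z-y‖²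
    rw [hsq] at hmin'
    rw [hS]
    linarith [hRlow, hmin', mul_nonneg hεpos.le (sq_nonneg (t*‖v‖))]
  have h1 := hkey t (abs_of_pos htpos)
  have h2 := hkey (-t) (by rw [abs_neg, abs_of_pos htpos])
  have hεT : ε*(t*‖v‖)^2 = -(S*t^2)/2 := by
    rw [hε]
    field_simp
  have hsum : 0 ≤ S*t^2 := by linarith [h1, h2, hεT]
  nlinarith only [hsum, hneg, mul_pos htpos htpos]




lemma aff_concave (l : F) (c : ℝ) {s : Set F} (hs : Convex ℝ s) :
    ConcaveOn ℝ s (fun x => ⟪l, x⟫ + c) := by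
  refine ⟨hs, fun x hx y hy α β hα hβ hαβ => ?_⟩
  simp only [inner_add_right, real_inner_smul_right, smul_eq_mul]
  have : α * (⟪l, x⟫ + c) + β * (⟪l, y⟫ + c) = α * ⟪l, x⟫ + β * ⟪l, y⟫ + (α + β) * c := by
    ring
  rw [this, hαβ]
  simp

lemma concave_bound {ψ : F → ℝ} {z : F} {M : ℝ} (hM : 0 < M) (hzn : ‖z‖ < 1)
    (hψ : ConcaveOn ℝ (ball (0:F) 1) ψ) (hψz : ψ z = 0)
    (hψlow : ∀ w ∈ ball (0:F) 1, -(M * ‖w - z‖^2) ≤ ψ w)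
    {x : F} (hx : x ∈ ball (0:F) 1) : ψ x ≤ M * ‖x - z‖^2 := by
  have hzb : z ∈ ball (0:F) 1 := by simpa using hzn
  by_cases hcase : ‖(2:ℝ)•z - x‖ < 1
  · have hx' : (2:ℝ)•z - x ∈ ball (0:F) 1 := by simpa using hcase
    have hcomb := hψ.2 hx hx' (by norm_num : (0:ℝ) ≤ 1/2) (by norm_num : (0:ℝ) ≤ 1/2)
      (by norm_num)
    have hpt : (1/2:ℝ)•x + (1/2:ℝ)•((2:ℝ)•z - x) = z := by module
    rw [hpt, hψz] at hcomb
    have h1 := hψlow ((2:ℝ)•z - x) hx'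
    have hne : ‖(2:ℝ)•z - x - z‖ = ‖x - z‖ := by
      rw [show (2:ℝ)•z - x - z = -(x - z) by module, norm_neg]
    rw [hne] at h1
    simp only [smul_eq_mul] at hcomb
    linarith
  · push_neg at hcase
    set r : ℝ := ‖x - z‖ with hr
    set s : ℝ := (1 - ‖z‖)/2 with hs
    have hspos : 0 < s := by simp only [hs]; linarith
    have hrs : 2*s ≤ r := by
      have h5 : ‖(2:ℝ)•z - x‖ ≤ ‖z‖ + ‖z - x‖ := by
        rw [show (2:ℝ)•z - x = z + (z - x) by module]
        exact norm_add_le _ _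
      have hzx : ‖z - x‖ = r := by rw [hr, norm_sub_rev]
      rw [hzx] at h5
      simp only [hs]; linarith
    have hrpos : 0 < r := by linarith
    set x' : F := z + (s/r)•(z-x) with hx'def
    have hx'b : x' ∈ ball (0:F) 1 := by
      have h6 : ‖x'‖ ≤ ‖z‖ + (s/r)*r := by
        rw [hx'def]
        refine (norm_add_le _ _).trans ?_
        rw [norm_smul, Real.norm_eq_abs, abs_of_pos (by positivity), norm_sub_rev]
        try simp [hr]
      rw [mem_ball_zero_iff]
      have hsr : (s/r)*r = s := by field_simp
      rw [hsr] at h6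
      simp only [hs] at h6 ⊢
      linarith
    set lam : ℝ := s/(s+r) with hlam
    have hsrpos : 0 < s + r := by linarith
    have hlampos : 0 < lam := by positivity
    have hlamle : 0 ≤ 1 - lam := by
      simp only [hlam]
      rw [sub_nonneg, div_le_one hsrpos]
      linarith
    have hcomb := hψ.2 hx hx'b hlampos.le hlamle (by ring)
    have hpt : lam•x + (1-lam)•x' = z := by
      rw [hx'def, hlam]
      match_scalars <;> (field_simp; try ring)
    rw [hpt, hψz] at hcomb
    have h1 := hψlow x' hx'b
    have hne : ‖x' - z‖ = s := by
      rw [hx'def]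
      simp only [add_sub_cancel_left]
      rw [norm_smul, Real.norm_eq_abs, abs_of_pos (by positivity), norm_sub_rev]
      field_simp
      exact hr.symm
    rw [hne] at h1
    simp only [smul_eq_mul] at hcomb
    -- clear denominators
    have hlameq : (s+r) * lam = s := by rw [hlam]; field_simp
    have hlameq2 : (s+r) * (1-lam) = r := by rw [hlam]; field_simp; ring
    have hcomb' : s * ψ x + r * ψ x' ≤ 0 := by
      have h7 := mul_le_mul_of_nonneg_left hcomb hsrpos.le
      calc s * ψ x + r * ψ x' = (s+r) * (lam * ψ x + (1-lam) * ψ x') := by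
            rw [mul_add, ← mul_assoc, ← mul_assoc, hlameq, hlameq2]
        _ ≤ 0 := by simpa using h7
    have h6 : s * ψ x ≤ M*s^2*r := by nlinarith
    have h8 : ψ x ≤ M*s*r := by
      have := (mul_le_mul_iff_right₀ hspos).mp (show s * ψ x ≤ s * (M*s*r) by nlinarith)
      exact this
    linarith [h8, mul_le_mul_of_nonneg_left hrs (mul_nonneg hM.le hrpos.le),
      mul_nonneg (mul_nonneg hM.le hrpos.le) hrpos.le]

lemma up_lemma {u : F → ℝ} {a k : ℝ} (hk : 0 < k) (ha : 0 < a) {p z : F}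
    (hzb : z ∈ ball (0:F) 1)
    (hconc : ConcaveOn ℝ (ball 0 1) (fun x => u x - k * ‖x‖ ^ 2))
    (hlow : ∀ x ∈ ball (0:F) 1, u z + ⟪p, x-z⟫ - (a/2)*‖x-z‖^2 ≤ u x)
    {x : F} (hx : x ∈ ball (0:F) 1) :
    u x ≤ u z + ⟪p, x-z⟫ + (2*k + a/2)*‖x-z‖^2 := by
  have hzn : ‖z‖ < 1 := by simpa using hzb
  have hψ : ConcaveOn ℝ (ball (0:F) 1)
      (fun w => u w - u z - ⟪p, w - z⟫ - k*‖w-z‖^2) := by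
    have h2 := hconc.add (aff_concave ((2*k)•z - p) (⟪p, z⟫ - u z - k*‖z‖^2) (convex_ball 0 1))
    convert h2 using 1
    · rfl
    funext w
    simp only [Pi.add_apply]
    have e1 : ‖w - z‖^2 = ‖w‖^2 - 2*⟪w,z⟫ + ‖z‖^2 := by
      rw [norm_sub_sq_real]
    have e2 : ⟪(2*k)•z - p, w⟫ = 2*k*⟪z,w⟫ - ⟪p,w⟫ := by
      rw [inner_sub_left, real_inner_smul_left]
    have e3 : ⟪p, w - z⟫ = ⟪p,w⟫ - ⟪p,z⟫ := by rw [inner_sub_right]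
    have e4 : ⟪w,z⟫ = ⟪z,w⟫ := real_inner_comm _ _
    rw [e1, e2, e3, e4]
    ring
  have hψz : (fun w => u w - u z - ⟪p, w - z⟫ - k*‖w-z‖^2) z = 0 := by simp
  have hψlow : ∀ w ∈ ball (0:F) 1,
      -((k + a/2) * ‖w - z‖^2) ≤ (fun w => u w - u z - ⟪p, w - z⟫ - k*‖w-z‖^2) w := by
    intro w hw
    have := hlow w hw
    simp only
    linarith
  have main := concave_bound (by positivity : (0:ℝ) < k + a/2) hzn hψ hψz hψlow hx
  linarith





lemma low_lemma {u : F → ℝ} {a : ℝ} {y z : F}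
    (hmin : ∀ x ∈ ball (0:F) 1, u z + (a/2)*‖z-y‖^2 ≤ u x + (a/2)*‖x-y‖^2)
    {x : F} (hx : x ∈ ball (0:F) 1) :
    u z + ⟪a•(y-z), x-z⟫ - (a/2)*‖x-z‖^2 ≤ u x := by
  have h := hmin x hx
  have hexp := sq_expand x z y
  have hin : ⟪a•(y-z), x-z⟫ = a * ⟪y-z, x-z⟫ := real_inner_smul_left _ _ _
  have h2 : ⟪x-z, z-y⟫ = -⟪y-z, x-z⟫ := by
    rw [real_inner_comm, show z-y = -(y-z) by abel, inner_neg_left]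
  rw [h2] at hexp
  rw [hin]
  rw [hexp] at h
  linarith


-- key pairwise inequality, B := 2*C₀ + a/2 with C₀ the upper constant
lemma key_ineq {u : F → ℝ} {a C₀ : ℝ} (ha : 0 < a) (hC₀ : 0 ≤ C₀) {p₁ p₂ z₁ z₂ : F}
    (hz₁ : z₁ ∈ ball (0:F) 1) (hz₂ : z₂ ∈ ball (0:F) 1)
    (hlow₁ : ∀ x ∈ ball (0:F) 1, u z₁ + ⟪p₁, x-z₁⟫ - (a/2)*‖x-z₁‖^2 ≤ u x)
    (hlow₂ : ∀ x ∈ ball (0:F) 1, u z₂ + ⟪p₂, x-z₂⟫ - (a/2)*‖x-z₂‖^2 ≤ u x)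
    (hup₂ : ∀ x ∈ ball (0:F) 1, u x ≤ u z₂ + ⟪p₂, x-z₂⟫ + C₀*‖x-z₂‖^2)
    {x : F} (hx : x ∈ ball (0:F) 1) :
    ⟪p₁ - p₂, x - z₁⟫ ≤ (2*C₀ + a/2) * (‖z₁-z₂‖^2 + ‖x-z₁‖^2) := by
  have h1 := hlow₁ x hx
  have h2 := hup₂ x hx
  have h3 := hlow₂ z₁ hz₁
  have e1 : ⟪p₂, x - z₂⟫ = ⟪p₂, x - z₁⟫ + ⟪p₂, z₁ - z₂⟫ := by
    rw [← inner_add_right]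
    congr 1
    abel
  have e2 : ⟪p₁ - p₂, x - z₁⟫ = ⟪p₁, x - z₁⟫ - ⟪p₂, x - z₁⟫ := inner_sub_left _ _ _
  have e3 : ‖x - z₂‖ ≤ ‖x - z₁‖ + ‖z₁ - z₂‖ := by
    have := norm_sub_le_norm_sub_add_norm_sub x z₁ z₂
    linarith
  have e4 : ‖x - z₂‖^2 ≤ 2*‖x-z₁‖^2 + 2*‖z₁-z₂‖^2 := by
    nlinarith [norm_nonneg (x - z₂), norm_nonneg (x - z₁), norm_nonneg (z₁ - z₂),
      sq_nonneg (‖x-z₁‖ - ‖z₁-z₂‖)]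
  nlinarith [norm_nonneg (x - z₂), sq_nonneg ‖x - z₂‖]


lemma grad_lip_core {B g r : ℝ} (hB : 0 < B) {P z₁ z₂ : F}
    (hz₁ : ‖z₁‖ < 1) (hz₂ : ‖z₂‖ < 1)
    (hg : ‖P‖ = g) (hr : ‖z₁ - z₂‖ = r)
    (hkey₁ : ∀ x, ‖x‖ < 1 → ⟪P, x - z₁⟫ ≤ B * (r^2 + ‖x - z₁‖^2))
    (hkey₂ : ∀ x, ‖x‖ < 1 → -(B * (r^2 + ‖x - z₂‖^2)) ≤ ⟪P, x - z₂⟫)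
    (hmono : ⟪P, z₁ - z₂⟫ ≤ B * r^2) : g ≤ 60 * B * r := by
  have hgnn : 0 ≤ g := hg ▸ norm_nonneg _
  have hrnn : 0 ≤ r := hr ▸ norm_nonneg _
  rcases eq_or_lt_of_le hrnn with hr0 | hrpos
  · -- r = 0 : show g = 0
    rcases eq_or_lt_of_le hgnn with hg0 | hgpos
    · rw [← hg0]; positivity
    · exfalso
      have htpos : 0 < min ((1 - ‖z₁‖)/(2*(g+1))) (1/(2*B)) := by
        refine lt_min (div_pos (by linarith) (by positivity)) (by positivity)
      set t := min ((1 - ‖z₁‖)/(2*(g+1))) (1/(2*B)) with ht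
      have hxball : ‖z₁ + t • P‖ < 1 := by
        refine lt_of_le_of_lt (norm_add_le _ _) ?_
        rw [norm_smul, Real.norm_eq_abs, abs_of_pos htpos, hg]
        have h1 : t * g ≤ ((1 - ‖z₁‖)/(2*(g+1))) * g :=
          mul_le_mul_of_nonneg_right (min_le_left _ _) hgnn
        have h2 : ((1 - ‖z₁‖)/(2*(g+1))) * g < 1 - ‖z₁‖ := by
          rw [div_mul_eq_mul_div, div_lt_iff₀ (by positivity)]
          have h2' : 0 < (1-‖z₁‖)*(g+2) := mul_pos (by linarith) (by linarith)
          linarith only [h2']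
        linarith
      have hk1 := hkey₁ (z₁ + t • P) hxball
      rw [add_sub_cancel_left, real_inner_smul_right, real_inner_self_eq_norm_sq, hg,
        norm_smul, Real.norm_eq_abs, abs_of_pos htpos, hg] at hk1
      have htB : B * t ≤ 1/2 := by
        have h3 : t ≤ 1/(2*B) := min_le_right _ _
        rw [le_div_iff₀ (by positivity)] at h3
        linarith
      rw [← hr0] at hk1
      have hpr := mul_le_mul_of_nonneg_right htB (mul_nonneg htpos.le (sq_nonneg g))
      linarith only [hk1, hpr, mul_pos htpos (pow_pos hgpos 2)]
  · -- r > 0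
    by_contra hcon
    push_neg at hcon
    have hgpos : 0 < g := lt_of_le_of_lt (by positivity) hcon
    obtain ⟨e, hen, hPe, hPge⟩ : ∃ e : F, ‖e‖ = 1 ∧ ⟪P, e⟫ = g ∧ P = g • e := by
      refine ⟨g⁻¹ • P, ?_, ?_, ?_⟩
      · rw [norm_smul, Real.norm_eq_abs, abs_of_pos (by positivity), hg]
        field_simp
      · rw [real_inner_smul_right, real_inner_self_eq_norm_sq, hg]
        field_simp
      · rw [smul_smul, show g * g⁻¹ = 1 by field_simp, one_smul]
    have hr2 : r < 2 := by
      have := norm_sub_le z₁ z₂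
      rw [hr] at this
      linarith
    rcases le_or_gt (1/4 : ℝ) r with hbig | hsmall
    · -- uniform bound
      have hx1 : ‖(9/10 : ℝ) • e‖ < 1 := by
        rw [norm_smul, Real.norm_eq_abs, hen, mul_one,
          abs_of_nonneg (by norm_num : (0:ℝ) ≤ 9/10)]
        norm_num
      have hx2 : ‖(-(9/10) : ℝ) • e‖ < 1 := by
        rw [norm_smul, Real.norm_eq_abs, hen, mul_one, abs_neg,
          abs_of_nonneg (by norm_num : (0:ℝ) ≤ 9/10)]
        norm_num
      have hb1 : ‖(9/10 : ℝ) • e - z₁‖^2 ≤ (19/10)^2 := by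
        refine pow_le_pow_left₀ (norm_nonneg _) ?_ 2
        refine (norm_sub_le _ _).trans ?_
        rw [norm_smul, Real.norm_eq_abs, hen, mul_one,
          abs_of_nonneg (by norm_num : (0:ℝ) ≤ 9/10)]
        linarith
      have hb2 : ‖(-(9/10) : ℝ) • e - z₂‖^2 ≤ (19/10)^2 := by
        refine pow_le_pow_left₀ (norm_nonneg _) ?_ 2
        refine (norm_sub_le _ _).trans ?_
        rw [norm_smul, Real.norm_eq_abs, hen, mul_one, abs_neg,
          abs_of_nonneg (by norm_num : (0:ℝ) ≤ 9/10)]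
        linarith
      have hk1 := hkey₁ ((9/10 : ℝ) • e) hx1
      have hk2 := hkey₂ ((-(9/10) : ℝ) • e) hx2
      rw [inner_sub_right, real_inner_smul_right, hPe] at hk1 hk2
      have hPz12 : ⟪P, z₁⟫ - ⟪P, z₂⟫ ≤ B * r^2 := by
        have h5 : ⟪P, z₁ - z₂⟫ = ⟪P, z₁⟫ - ⟪P, z₂⟫ := inner_sub_right _ _ _
        linarith [hmono, h5 ▸ hmono]
      have c1 : (9/10)*g - ⟪P, z₁⟫ ≤ B*(r^2 + (19/10)^2) := by
        have := mul_le_mul_of_nonneg_left hb1 hB.le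
        linarith only [hk1, this]
      have c2 : -((9/10)*g) - ⟪P, z₂⟫ ≥ -(B*(r^2 + (19/10)^2)) := by
        have := mul_le_mul_of_nonneg_left hb2 hB.le
        linarith only [hk2, this]
      have hr4 : r^2 ≤ 4 := by nlinarith only [hr2, hrnn]
      have hgle : g ≤ 11*B := by
        have := mul_le_mul_of_nonneg_left hr4 hB.le
        linarith only [c1, c2, hPz12, this, hB]
      have := mul_le_mul_of_nonneg_left hbig (by positivity : (0:ℝ) ≤ 60*B)
      linarith only [this, hcon, hgle, hB]
    · -- r < 1/4
      by_cases hc1 : ‖z₁ + r • e‖ < 1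
      · have hk1 := hkey₁ (z₁ + r • e) hc1
        rw [add_sub_cancel_left, real_inner_smul_right, hPe, norm_smul,
          Real.norm_eq_abs, abs_of_pos hrpos, hen, mul_one] at hk1
        have := mul_lt_mul_of_pos_right hcon hrpos
        linarith only [hk1, this, mul_pos hB (mul_pos hrpos hrpos)]
      · by_cases hc2 : ‖z₂ - r • e‖ < 1
        · have hk2 := hkey₂ (z₂ - r • e) hc2
          rw [show z₂ - r • e - z₂ = -(r • e) by abel, inner_neg_right,
            real_inner_smul_right, hPe, norm_neg, norm_smul,
            Real.norm_eq_abs, abs_of_pos hrpos, hen, mul_one] at hk2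
          have := mul_lt_mul_of_pos_right hcon hrpos
          linarith only [hk2, this, mul_pos hB (mul_pos hrpos hrpos)]
        · -- both outside : boundary configuration
          push_neg at hc1 hc2
          have hz1n : 0 ≤ ‖z₁‖ := norm_nonneg _
          have hz2n : 0 ≤ ‖z₂‖ := norm_nonneg _
          have hα1 : 1 ≤ ‖z₁‖^2 + 2*(r*⟪z₁, e⟫) + r^2 := by
            have h1 : (1:ℝ) ≤ ‖z₁ + r • e‖^2 := by nlinarith only [hc1]
            rw [norm_add_sq_real, real_inner_smul_right, norm_smul, Real.norm_eq_abs,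
              abs_of_pos hrpos, hen, mul_one] at h1
            linarith only [h1]
          have hβ1 : 1 ≤ ‖z₂‖^2 - 2*(r*⟪z₂, e⟫) + r^2 := by
            have h1 : (1:ℝ) ≤ ‖z₂ - r • e‖^2 := by nlinarith only [hc2]
            rw [norm_sub_sq_real, real_inner_smul_right, norm_smul, Real.norm_eq_abs,
              abs_of_pos hrpos, hen, mul_one] at h1
            linarith only [h1]
          obtain ⟨α, hα⟩ : ∃ α, ⟪z₁, e⟫ = α := ⟨_, rfl⟩
          obtain ⟨β, hβ⟩ : ∃ β, ⟪z₂, e⟫ = β := ⟨_, rfl⟩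
          rw [hα] at hα1
          rw [hβ] at hβ1
          have hαlow : -r/2 ≤ α := by nlinarith only [hα1, hz₁, hz1n, hrpos]
          have hβup : β ≤ r/2 := by nlinarith only [hβ1, hz₂, hz2n, hrpos]
          have hPz1 : ⟪P, z₁⟫ = g*α := by
            rw [hPge, real_inner_smul_left, real_inner_comm, hα]
          have hPz2 : ⟪P, z₂⟫ = g*β := by
            rw [hPge, real_inner_smul_left, real_inner_comm, hβ]
          have hαle1 : α ≤ 1 := by
            rw [← hα]
            calc ⟪z₁, e⟫ ≤ ‖z₁‖ * ‖e‖ := real_inner_le_norm _ _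
              _ ≤ 1 := by rw [hen, mul_one]; linarith
          have hαβ : α - β ≤ r/60 := by
            have h2 : g*(α-β) ≤ B*r^2 := by
              have h1 : ⟪P, z₁ - z₂⟫ = g*α - g*β := by rw [inner_sub_right, hPz1, hPz2]
              rw [h1] at hmono
              linarith only [hmono]
            by_contra hcc
            push_neg at hcc
            have h3 : g * (r/60) < g*(α-β) := mul_lt_mul_of_pos_left hcc hgpos
            have h5 : (60*B*r)*(r/60) < g*(r/60) :=
              mul_lt_mul_of_pos_right hcon (by linarith only [hrpos])
            nlinarith only [h2, h3, h5]
          have hαup : α ≤ (31/60)*r := by linarith only [hαβ, hβup]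
          have hrr : r*r < (1/4)*r := by
            have := mul_lt_mul_of_pos_right hsmall hrpos
            linarith only [this]
          have hσle : (21/10)*r^2 ≤ (21/40)*r := by nlinarith only [hrr]
          have hr216 : r^2 < 1/16 := by nlinarith only [hrr, hsmall, hrpos]
          have hσlt1 : (21/10)*r^2 < 1 := by linarith only [hr216]
          -- the shifted test point
          have hxball : ‖(1-(21/10)*r^2)•z₁ + r•e‖ < 1 := by
            have hexp : ‖(1-(21/10)*r^2)•z₁ + r•e‖^2
                = (1-(21/10)*r^2)^2*‖z₁‖^2 + 2*((1-(21/10)*r^2)*(r*α)) + r^2 := by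
              rw [norm_add_sq_real, real_inner_smul_left, real_inner_smul_right, hα,
                norm_smul, norm_smul, Real.norm_eq_abs, Real.norm_eq_abs,
                abs_of_pos hrpos, hen, abs_of_pos (by linarith only [hσlt1] : (0:ℝ) < 1-(21/10)*r^2)]
              ring
            have hz1sq : ‖z₁‖^2 ≤ 1 := by nlinarith only [hz₁, hz1n]
            have hcross : 2*((1-(21/10)*r^2)*(r*α)) ≤ 2*(r*((31/60)*r)) := by
              have h7 : r*α ≤ r*((31/60)*r) := mul_le_mul_of_nonneg_left hαup hrpos.le
              rcases le_or_gt 0 α with hα0 | hα0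
              · have h6 := mul_nonneg (by positivity : (0:ℝ) ≤ (21/10)*r^2)
                  (mul_nonneg hrpos.le hα0)
                linarith only [h6, h7]
              · have h6 : (1-(21/10)*r^2)*(r*α) ≤ 0 :=
                  mul_nonpos_of_nonneg_of_nonpos (by linarith only [hσlt1])
                    (mul_nonpos_of_nonneg_of_nonpos hrpos.le hα0.le)
                have h8 : 0 ≤ r*((31/60)*r) := by positivity
                linarith only [h6, h8]
            have hr4mul : r^2*r^2 ≤ (1/16)*r^2 :=
              mul_le_mul_of_nonneg_right hr216.le (sq_nonneg r)
            have hmulN := mul_le_mul_of_nonneg_left hz1sq (sq_nonneg (1-(21/10)*r^2))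
            have hsq : ‖(1-(21/10)*r^2)•z₁ + r•e‖^2 < 1 := by
              rw [hexp]
              have hrr2 : 0 < r*r := mul_pos hrpos hrpos
              nlinarith only [hmulN, hcross, hr4mul, hrr2, hrpos]
            nlinarith only [hsq, norm_nonneg ((1-(21/10)*r^2)•z₁ + r•e)]
          have hk1 := hkey₁ ((1-(21/10)*r^2)•z₁ + r•e) hxball
          have hdiff : (1-(21/10)*r^2)•z₁ + r•e - z₁ = r•e - ((21/10)*r^2)•z₁ := by
            module
          rw [hdiff] at hk1
          have hinn : ⟪P, r•e - ((21/10)*r^2)•z₁⟫ = r*g - (21/10)*r^2*(g*α) := by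
            rw [inner_sub_right, real_inner_smul_right, real_inner_smul_right, hPe, hPz1]
            try ring
          rw [hinn] at hk1
          have hnrm : ‖r•e - ((21/10)*r^2)•z₁‖ ≤ (61/40)*r := by
            refine (norm_sub_le _ _).trans ?_
            rw [norm_smul, norm_smul, Real.norm_eq_abs, Real.norm_eq_abs,
              abs_of_pos hrpos, hen, mul_one, abs_of_pos (by positivity : (0:ℝ) < (21/10)*r^2)]
            have h9 := mul_le_mul_of_nonneg_right hσle hz1n
            have h10 := mul_le_mul_of_nonneg_left hz₁.le (by positivity : (0:ℝ) ≤ (21/40)*r)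
            linarith only [h9, h10]
          have hnrm2 : ‖r•e - ((21/10)*r^2)•z₁‖^2 ≤ ((61/40)*r)^2 :=
            pow_le_pow_left₀ (norm_nonneg _) hnrm 2
          have t1 : (21/10)*r^2*(g*α) ≤ (21/40)*(r*g) := by
            have e9 : g*α ≤ g := by nlinarith only [hαle1, hgpos]
            have e10 := mul_le_mul_of_nonneg_left e9 (by positivity : (0:ℝ) ≤ (21/10)*r^2)
            have e11 := mul_le_mul_of_nonneg_right hσle hgpos.le
            linarith only [e10, e11]
          have t3 : (19/40)*(r*g) ≤ B*(r^2 + ((61/40)*r)^2) := by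
            have := mul_le_mul_of_nonneg_left hnrm2 hB.le
            linarith only [hk1, t1, this]
          have := mul_lt_mul_of_pos_right hcon hrpos
          linarith only [t3, this, mul_pos hB (mul_pos hrpos hrpos)]

end Aux


/-- Second-order (Taylor) expansion of `u` at `x` with gradient `p` and Hessian `H`. -/
def HasSecondOrderExpansionAt {d : ℕ} (u : EuclideanSpace ℝ (Fin d) → ℝ)
    (p : EuclideanSpace ℝ (Fin d) →L[ℝ] ℝ)
    (H : EuclideanSpace ℝ (Fin d) →L[ℝ] EuclideanSpace ℝ (Fin d) →L[ℝ] ℝ)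
    (x : EuclideanSpace ℝ (Fin d)) : Prop :=
  (fun y => u y - u x - p (y - x) - (1 / 2) * H (y - x) (y - x))
    =o[nhds x] fun y => ‖y - x‖ ^ 2

local notation "⟪" x ", " y "⟫" => @inner ℝ _ _ x y

/-- the touching map z̄ has Lipschitz inverse ȳ(z) = z + (1/a)Du(z) on the
contact set A, u is C^{1,1} on A, and Dȳ = I + (1/a)D²u ≥ 0 at twice-differentiability
points of A. -/
theorem stmt8 (d : ℕ) (u : EuclideanSpace ℝ (Fin d) → ℝ) (k : ℝ) (hk : 0 < k)
    (hconc : ConcaveOn ℝ (ball 0 1) (fun x => u x - k * ‖x‖ ^ 2))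
    (a : ℝ) (ha : 1 ≤ a)
    (V : Set (EuclideanSpace ℝ (Fin d))) (hV : MeasurableSet V)
    (zbar : EuclideanSpace ℝ (Fin d) → EuclideanSpace ℝ (Fin d)) (hzm : Measurable zbar)
    (hz : ∀ y ∈ V, zbar y ∈ ball (0 : EuclideanSpace ℝ (Fin d)) 1 ∧
      ∀ x ∈ ball (0 : EuclideanSpace ℝ (Fin d)) 1,
        u (zbar y) + (a / 2) * ‖zbar y - y‖ ^ 2 ≤ u x + (a / 2) * ‖x - y‖ ^ 2)
    (A : Set (EuclideanSpace ℝ (Fin d))) (hA : A = zbar '' V) :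
    ∃ g : EuclideanSpace ℝ (Fin d) → EuclideanSpace ℝ (Fin d),
      (∀ z ∈ A, HasFDerivWithinAt u
        ((InnerProductSpace.toDual ℝ (EuclideanSpace ℝ (Fin d))) (g z)) (ball 0 1) z) ∧
      (∃ C : ℝ, ∀ x ∈ A, ∀ y ∈ ball (0 : EuclideanSpace ℝ (Fin d)) 1,
        |u y - u x - (inner ℝ (g x) (y - x) : ℝ)| ≤ C * ‖x - y‖ ^ 2) ∧
      (∃ C : NNReal, LipschitzOnWith C (fun z => z + a⁻¹ • g z) A) ∧
      (∀ y ∈ V, zbar y + a⁻¹ • g (zbar y) = y) ∧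
      (∀ z ∈ A, ∀ p H, HasSecondOrderExpansionAt u p H z →
        ∀ v : EuclideanSpace ℝ (Fin d), 0 ≤ ‖v‖ ^ 2 + a⁻¹ * H v v) := by
  classical
  have ha0 : (0:ℝ) < a := lt_of_lt_of_le one_pos ha
  have hex : ∀ z ∈ A, ∃ y, y ∈ V ∧ zbar y = z := by
    intro z hz'
    rw [hA] at hz'
    obtain ⟨y, hy, hzy⟩ := hz'
    exact ⟨y, hy, hzy⟩
  choose! yb hybV hybz using hex
  -- basic facts
  have hmem : ∀ z ∈ A, z ∈ ball (0:EuclideanSpace ℝ (Fin d)) 1 := by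
    intro z hz'
    have h := (hz (yb z) (hybV z hz')).1
    rwa [hybz z hz'] at h
  have hminz : ∀ z ∈ A, ∀ x ∈ ball (0:EuclideanSpace ℝ (Fin d)) 1,
      u z + (a/2) * ‖z - yb z‖^2 ≤ u x + (a/2) * ‖x - yb z‖^2 := by
    intro z hz' x hx
    have h := (hz (yb z) (hybV z hz')).2 x hx
    rwa [hybz z hz'] at h
  -- gradient candidate
  obtain ⟨g, hgdef⟩ : ∃ g : EuclideanSpace ℝ (Fin d) → EuclideanSpace ℝ (Fin d),
      g = fun z => a • (yb z - z) := ⟨_, rfl⟩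
  obtain ⟨C₀, hC₀⟩ : ∃ c : ℝ, c = 2*k + a/2 := ⟨_, rfl⟩
  have hC₀pos : 0 < C₀ := by rw [hC₀]; linarith
  obtain ⟨Bc, hBc⟩ : ∃ c : ℝ, c = 2*C₀ + a/2 := ⟨_, rfl⟩
  have hBcpos : 0 < Bc := by rw [hBc]; linarith
  -- lower and upper bounds at points of A
  have hlow : ∀ z ∈ A, ∀ x ∈ ball (0:EuclideanSpace ℝ (Fin d)) 1,
      u z + ⟪g z, x - z⟫ - (a/2)*‖x-z‖^2 ≤ u x := by
    intro z hz' x hx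
    simp only [hgdef]
    exact low_lemma (hminz z hz') hx
  have hup : ∀ z ∈ A, ∀ x ∈ ball (0:EuclideanSpace ℝ (Fin d)) 1,
      u x ≤ u z + ⟪g z, x - z⟫ + C₀*‖x-z‖^2 := by
    intro z hz' x hx
    rw [hC₀]
    exact up_lemma hk ha0 (hmem z hz') hconc (fun x' hx' => by
      have h := hlow z hz' x' hx'
      simpa [hgdef] using h) hx
  -- two sided bound
  have habs : ∀ z ∈ A, ∀ x ∈ ball (0:EuclideanSpace ℝ (Fin d)) 1,
      |u x - u z - ⟪g z, x - z⟫| ≤ C₀*‖x-z‖^2 := by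
    intro z hz' x hx
    rw [abs_le]
    constructor
    · have h := hlow z hz' x hx
      have : (a/2)*‖x-z‖^2 ≤ C₀*‖x-z‖^2 := by
        have : a/2 ≤ C₀ := by rw [hC₀]; linarith
        nlinarith [sq_nonneg ‖x-z‖, this]
      linarith
    · have h := hup z hz' x hx
      linarith
  -- key inequalities for pairs in A (also for arbitrary pairs satisfying low/up)
  have hkey : ∀ z₁ ∈ A, ∀ z₂ ∈ A, ∀ x, ‖x‖ < 1 →
      ⟪g z₁ - g z₂, x - z₁⟫ ≤ Bc * (‖z₁-z₂‖^2 + ‖x-z₁‖^2) := by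
    intro z₁ h₁ z₂ h₂ x hx
    rw [hBc]
    exact key_ineq ha0 hC₀pos.le (hmem z₁ h₁) (hmem z₂ h₂)
      (hlow z₁ h₁) (hlow z₂ h₂) (hup z₂ h₂) (mem_ball_zero_iff.2 hx)
  have hmono : ∀ z₁ ∈ A, ∀ z₂ ∈ A, ⟪g z₁ - g z₂, z₁ - z₂⟫ ≤ Bc * ‖z₁-z₂‖^2 := by
    intro z₁ h₁ z₂ h₂
    have h12 := hup z₁ h₁ z₂ (hmem z₂ h₂)
    have h21 := hup z₂ h₂ z₁ (hmem z₁ h₁)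
    have e1 : ⟪g z₁, z₂ - z₁⟫ = -⟪g z₁, z₁ - z₂⟫ := by
      rw [show z₂ - z₁ = -(z₁ - z₂) by abel, inner_neg_right]
    have e2 : ⟪g z₁ - g z₂, z₁ - z₂⟫ = ⟪g z₁, z₁ - z₂⟫ - ⟪g z₂, z₁ - z₂⟫ :=
      inner_sub_left _ _ _
    have e3 : ‖z₂ - z₁‖ = ‖z₁ - z₂‖ := norm_sub_rev _ _
    rw [e3] at h12
    rw [e1] at h12
    have e4 : (2*C₀)*‖z₁ - z₂‖^2 ≤ Bc*‖z₁-z₂‖^2 := by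
      have : 2*C₀ ≤ Bc := by rw [hBc]; linarith
      nlinarith [sq_nonneg ‖z₁-z₂‖, this]
    linarith
  -- Lipschitz bound on gradients
  have hglip : ∀ z₁ ∈ A, ∀ z₂ ∈ A, ‖g z₁ - g z₂‖ ≤ 60*Bc*‖z₁-z₂‖ := by
    intro z₁ h₁ z₂ h₂
    refine grad_lip_core hBcpos (mem_ball_zero_iff.1 (hmem z₁ h₁))
      (mem_ball_zero_iff.1 (hmem z₂ h₂)) rfl rfl (hkey z₁ h₁ z₂ h₂) ?_ (hmono z₁ h₁ z₂ h₂)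
    intro x hx
    have h := hkey z₂ h₂ z₁ h₁ x hx
    have e1 : ⟪g z₂ - g z₁, x - z₂⟫ = -⟪g z₁ - g z₂, x - z₂⟫ := by
      rw [show g z₂ - g z₁ = -(g z₁ - g z₂) by abel, inner_neg_left]
    have e3 : ‖z₂ - z₁‖ = ‖z₁ - z₂‖ := norm_sub_rev _ _
    rw [e1, e3] at h
    linarith
  refine ⟨g, ?_, ?_, ?_, ?_, ?_⟩
  · -- differentiability
    intro z hz'
    exact fderiv_from_bounds (habs z hz')
  · -- C^{1,1} bound
    refine ⟨C₀, ?_⟩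
    intro x hx y hy
    have h := habs x hx y hy
    rwa [norm_sub_rev y x] at h
  · -- Lipschitz inverse
    refine ⟨Real.toNNReal (1 + a⁻¹*(60*Bc)), ?_⟩
    rw [lipschitzOnWith_iff_dist_le_mul]
    intro z₁ h₁ z₂ h₂
    rw [dist_eq_norm, dist_eq_norm]
    have hco : (Real.toNNReal (1 + a⁻¹*(60*Bc)) : ℝ) = 1 + a⁻¹*(60*Bc) := by
      rw [Real.coe_toNNReal]
      positivity
    rw [hco]
    have hsplit : z₁ + a⁻¹ • g z₁ - (z₂ + a⁻¹ • g z₂) = (z₁ - z₂) + a⁻¹ • (g z₁ - g z₂) := by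
      rw [smul_sub]
      abel
    rw [hsplit]
    refine (norm_add_le _ _).trans ?_
    rw [norm_smul, Real.norm_eq_abs, abs_of_pos (by positivity : (0:ℝ) < a⁻¹)]
    have h3 := hglip z₁ h₁ z₂ h₂
    have h4 : a⁻¹ * ‖g z₁ - g z₂‖ ≤ a⁻¹ * (60*Bc*‖z₁-z₂‖) := by
      refine mul_le_mul_of_nonneg_left h3 (by positivity)
    nlinarith [norm_nonneg (z₁ - z₂)]
  · -- inverse property
    intro y hy
    obtain ⟨z, hzdef⟩ : ∃ z, z = zbar y := ⟨_, rfl⟩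
    have hzA : z ∈ A := by rw [hA, hzdef]; exact ⟨y, hy, rfl⟩
    have hminy : ∀ x ∈ ball (0:EuclideanSpace ℝ (Fin d)) 1,
        u z + (a/2) * ‖z - y‖^2 ≤ u x + (a/2) * ‖x - y‖^2 := by
      intro x hx
      rw [hzdef]
      exact (hz y hy).2 x hx
    have hlowy : ∀ x ∈ ball (0:EuclideanSpace ℝ (Fin d)) 1,
        u z + ⟪a • (y - z), x - z⟫ - (a/2)*‖x-z‖^2 ≤ u x := by
      intro x hx
      exact low_lemma hminy hx
    have hupy : ∀ x ∈ ball (0:EuclideanSpace ℝ (Fin d)) 1,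
        u x ≤ u z + ⟪a • (y - z), x - z⟫ + C₀*‖x-z‖^2 := by
      intro x hx
      rw [hC₀]
      exact up_lemma hk ha0 (hmem z hzA) hconc hlowy hx
    -- uniqueness of the touching gradient via grad_lip_core with z₁ = z₂ = z
    have huniq : ‖(a • (y - z)) - g z‖ ≤ 60*Bc*‖z - z‖ := by
      refine grad_lip_core hBcpos (mem_ball_zero_iff.1 (hmem z hzA))
        (mem_ball_zero_iff.1 (hmem z hzA)) rfl rfl ?_ ?_ ?_
      · intro x hx
        rw [hBc]
        exact key_ineq ha0 hC₀pos.le (hmem z hzA) (hmem z hzA)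
          hlowy (hlow z hzA) (hup z hzA) (mem_ball_zero_iff.2 hx)
      · intro x hx
        have h := key_ineq ha0 hC₀pos.le (hmem z hzA) (hmem z hzA)
          (hlow z hzA) hlowy hupy (mem_ball_zero_iff.2 hx)
        have e1 : ⟪g z - a • (y - z), x - z⟫ = -⟪a • (y - z) - g z, x - z⟫ := by
          rw [show g z - a • (y - z) = -(a • (y - z) - g z) by abel, inner_neg_left]
        rw [e1] at h
        rw [hBc]
        linarith
      · simp
    rw [sub_self, norm_zero, mul_zero] at huniq
    have hPzero : a • (y - z) - g z = 0 := by
      rw [← norm_eq_zero]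
      exact le_antisymm huniq (norm_nonneg _)
    have hy_eq : a • (y - z) = g z := by
      rwa [sub_eq_zero] at hPzero
    rw [← hzdef, ← hy_eq, smul_smul, inv_mul_cancel₀ (ne_of_gt ha0), one_smul]
    abel
  · -- positivity of I + a⁻¹ D²u
    intro z hz' p H hexp v
    exact hess_pos ha0 (mem_ball_zero_iff.1 (hmem z hz')) (hminz z hz') p H hexp v
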